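/- arXiv:2507.04007 — 2 statements merged into one kernel-verified Lean document; each statement's English description precedes it below -/
import Mathlib

section
/- There exists a real number f_Δ such that: (i) for all positive integers m, n, one has ln Δ(m,n) / ((m+1)(n+1)) < f_Δ < ln Δ(m,n) / (m·n); and (ii) the function (m,n) ↦ ln Δ(m,n)/(m·n) tends to f_Δ along the product filter atTop on ℕ × ℕ (as m and n both tend to infinity). -/
open SimpleGraph Filter Real Topology

open Classical in
/-- Number of independent sets (vertex subsets with no two adjacent vertices,
the empty set included) of a finite simple graph. -/
noncomputable def numIndep {V : Type*} [Fintype V] (G : SimpleGraph V) : ℕ :=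
  (Finset.univ.filter fun s : Finset V => ∀ u ∈ s, ∀ v ∈ s, ¬ G.Adj u v).card

/-- `N(m,n)`: number of independent sets of the `m × n` grid graph, the box
product of the path graphs on `m` and `n` vertices. -/
noncomputable def gridN (m n : ℕ) : ℕ :=
  numIndep (pathGraph m □ pathGraph n)


/-- The `m × n` triangular grid graph: grid edges together with the
anti-diagonal edges joining `(i+1, j)` and `(i, j+1)`. -/
noncomputable def triGrid (m n : ℕ) : SimpleGraph (Fin m × Fin n) :=
  (pathGraph m □ pathGraph n) ⊔
    SimpleGraph.fromRel (fun u v => u.1.val = v.1.val + 1 ∧ u.2.val + 1 = v.2.val)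

/-- `Δ(m,n)`: number of independent sets of the `m × n` triangular grid graph. -/
noncomputable def triDelta (m n : ℕ) : ℕ := numIndep (triGrid m n)



def Rnat (a b : ℕ × ℕ) : Prop :=
  (a.2 = b.2 ∧ (a.1 + 1 = b.1 ∨ b.1 + 1 = a.1)) ∨
  (a.1 = b.1 ∧ (a.2 + 1 = b.2 ∨ b.2 + 1 = a.2)) ∨
  (a.1 = b.1 + 1 ∧ a.2 + 1 = b.2) ∨ (b.1 = a.1 + 1 ∧ b.2 + 1 = a.2)

lemma triGrid_adj_iff {m n : ℕ} {u v : Fin m × Fin n} :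
    (triGrid m n).Adj u v ↔ Rnat (u.1.val, u.2.val) (v.1.val, v.2.val) := by
  simp only [triGrid, sup_adj, boxProd_adj, pathGraph_adj, SimpleGraph.fromRel_adj, ne_eq,
    Prod.ext_iff, Fin.ext_iff, Rnat]
  omega

open Classical in
noncomputable def Ind (m n : ℕ) : Finset (Finset (Fin m × Fin n)) :=
  Finset.univ.filter fun s => ∀ u ∈ s, ∀ v ∈ s, ¬ (triGrid m n).Adj u v

open Classical in
lemma triDelta_eq (m n : ℕ) : triDelta m n = (Ind m n).card := by
  unfold triDelta numIndep Ind
  exact congrArg Finset.card (Finset.filter_congr_decidable _ _ _)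

open Classical in
lemma mem_Ind {m n : ℕ} {s : Finset (Fin m × Fin n)} :
    s ∈ Ind m n ↔ ∀ u ∈ s, ∀ v ∈ s, ¬ (triGrid m n).Adj u v := by
  simp [Ind]

lemma empty_mem_Ind (m n : ℕ) : (∅ : Finset (Fin m × Fin n)) ∈ Ind m n := by
  simp [mem_Ind]

lemma singleton_mem_Ind {m n : ℕ} (x : Fin m × Fin n) : ({x} : Finset _) ∈ Ind m n := by
  simp only [mem_Ind, Finset.mem_singleton]
  rintro u rfl v rfl
  exact (triGrid m n).irrefl

lemma one_le_triDelta (m n : ℕ) : 1 ≤ triDelta m n := by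
  rw [triDelta_eq]
  exact Finset.card_pos.mpr ⟨∅, empty_mem_Ind m n⟩

lemma two_le_triDelta {m n : ℕ} (hm : 0 < m) (hn : 0 < n) : 2 ≤ triDelta m n := by
  rw [triDelta_eq]
  have h : ({∅, {(⟨0, hm⟩, ⟨0, hn⟩)}} : Finset (Finset (Fin m × Fin n))) ⊆ Ind m n := by
    intro s hs
    rcases Finset.mem_insert.mp hs with rfl | hs
    · exact empty_mem_Ind m n
    · rw [Finset.mem_singleton.mp hs]; exact singleton_mem_Ind _
  calc 2 = ({∅, {(⟨0, hm⟩, ⟨0, hn⟩)}} : Finset (Finset (Fin m × Fin n))).card := by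
          rw [Finset.card_pair ((Finset.singleton_ne_empty _).symm)]
    _ ≤ _ := Finset.card_le_card h

open Classical in
lemma triDelta_le (m n : ℕ) : triDelta m n ≤ 2 ^ (m * n) := by
  rw [triDelta_eq]
  calc (Ind m n).card ≤ (Finset.univ : Finset (Finset (Fin m × Fin n))).card :=
        Finset.card_le_card (Finset.filter_subset _ _)
    _ = 2 ^ (m * n) := by
        rw [Finset.card_univ, Fintype.card_finset]; simp

lemma triDelta_zero (n : ℕ) : triDelta 0 n = 1 :=
  le_antisymm (by simpa using triDelta_le 0 n) (one_le_triDelta 0 n)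
open Classical in
lemma card_Ind_le_of_map {m n M N : ℕ} (e : (Fin m × Fin n) ↪ (Fin M × Fin N))
    (he : ∀ u v, (triGrid M N).Adj (e u) (e v) → (triGrid m n).Adj u v) :
    (Ind m n).card ≤ (Ind M N).card := by
  apply Finset.card_le_card_of_injOn (fun s => s.map e)
  · intro s hs
    simp only [Finset.mem_coe, mem_Ind] at hs ⊢
    intro u hu v hv hadj
    rw [Finset.mem_map] at hu hv
    obtain ⟨x, hx, rfl⟩ := hu
    obtain ⟨y, hy, rfl⟩ := hv
    exact hs x hx y hy (he x y hadj)
  · intro s _ t _ h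
    exact Finset.map_injective e h

lemma triDelta_mono {m n M N : ℕ} (hm : m ≤ M) (hn : n ≤ N) :
    triDelta m n ≤ triDelta M N := by
  rw [triDelta_eq, triDelta_eq]
  refine card_Ind_le_of_map ⟨fun x => (x.1.castLE hm, x.2.castLE hn), ?_⟩ ?_
  · intro x y h
    simp only [Prod.ext_iff, Fin.ext_iff, Fin.coe_castLE] at h ⊢
    exact h
  · intro u v h
    rw [triGrid_adj_iff] at h ⊢
    simpa [DFunLike.coe] using h

lemma triDelta_comm (m n : ℕ) : triDelta m n = triDelta n m := by
  have key : ∀ m n : ℕ, triDelta m n ≤ triDelta n m := by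
    intro m n
    rw [triDelta_eq, triDelta_eq]
    refine card_Ind_le_of_map ⟨fun x => (x.2, x.1), ?_⟩ ?_
    · intro x y h
      simp only [Prod.ext_iff] at h ⊢
      exact ⟨h.2, h.1⟩
    · intro u v h
      rw [triGrid_adj_iff] at h ⊢
      simp only [Function.Embedding.coeFn_mk, DFunLike.coe, Rnat] at h ⊢
      omega
  exact le_antisymm (key m n) (key n m)

noncomputable def splitMap (a b n : ℕ) (S : Finset (Fin (a + b) × Fin n)) :
    Finset (Fin a × Fin n) × Finset (Fin b × Fin n) :=
  (Finset.univ.filter fun x => ((x.1.castAdd b, x.2) : Fin (a + b) × Fin n) ∈ S,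
   Finset.univ.filter fun x => ((x.1.natAdd a, x.2) : Fin (a + b) × Fin n) ∈ S)

lemma splitMap_mapsTo {a b n : ℕ} {S : Finset (Fin (a + b) × Fin n)} (hS : S ∈ Ind (a + b) n) :
    (splitMap a b n S).1 ∈ Ind a n ∧ (splitMap a b n S).2 ∈ Ind b n := by
  rw [mem_Ind] at hS
  constructor <;>
  · rw [mem_Ind]
    intro u hu v hv hadj
    simp only [splitMap, Finset.mem_filter, Finset.mem_univ, true_and] at hu hv
    refine hS _ hu _ hv ?_
    rw [triGrid_adj_iff] at hadj ⊢
    simp only [Rnat, Fin.coe_castAdd, Fin.coe_natAdd] at hadj ⊢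
    omega

lemma splitMap_inj {a b n : ℕ} : Function.Injective (splitMap a b n) := by
  intro S T h
  have h1 := congrArg Prod.fst h
  have h2 := congrArg Prod.snd h
  simp only [splitMap] at h1 h2
  ext z
  obtain ⟨z1, z2⟩ := z
  by_cases hz : z1.val < a
  · have hz1 : z1 = Fin.castAdd b ⟨z1.val, hz⟩ := by ext; simp
    rw [hz1]
    have := Finset.ext_iff.mp h1 (⟨z1.val, hz⟩, z2)
    simpa using this
  · have hz1 : z1 = Fin.natAdd a ⟨z1.val - a, by omega⟩ := by ext; simp; omega
    rw [hz1]
    have := Finset.ext_iff.mp h2 (⟨z1.val - a, by omega⟩, z2)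
    simpa using this

open Classical in
lemma triDelta_subadd (a b n : ℕ) : triDelta (a + b) n ≤ triDelta a n * triDelta b n := by
  rw [triDelta_eq, triDelta_eq, triDelta_eq, ← Finset.card_product]
  exact Finset.card_le_card_of_injOn (splitMap a b n)
    (fun S hS => Finset.mem_product.mpr (splitMap_mapsTo hS))
    (fun S _ T _ h => splitMap_inj h)

open Classical in
lemma triDelta_subadd_strict {a b n : ℕ} (ha : 0 < a) (hb : 0 < b) (hn : 0 < n) :
    triDelta (a + b) n + 1 ≤ triDelta a n * triDelta b n := by
  set w : Finset (Fin a × Fin n) × Finset (Fin b × Fin n) :=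
    ({(⟨a - 1, by omega⟩, ⟨0, hn⟩)}, {(⟨0, hb⟩, ⟨0, hn⟩)}) with hw
  have hwmem : w ∈ Ind a n ×ˢ Ind b n :=
    Finset.mem_product.mpr ⟨singleton_mem_Ind _, singleton_mem_Ind _⟩
  have hmain : (Ind (a + b) n).card ≤ ((Ind a n ×ˢ Ind b n).erase w).card := by
    apply Finset.card_le_card_of_injOn (splitMap a b n) ?_ (fun S _ T _ h => splitMap_inj h)
    intro S hS
    refine Finset.mem_erase.mpr ⟨?_, Finset.mem_product.mpr (splitMap_mapsTo hS)⟩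
    intro heq
    have h1 : ((⟨a - 1, by omega⟩, ⟨0, hn⟩) : Fin a × Fin n) ∈ (splitMap a b n S).1 := by
      rw [heq, hw]; simp
    have h2 : ((⟨0, hb⟩, ⟨0, hn⟩) : Fin b × Fin n) ∈ (splitMap a b n S).2 := by
      rw [heq, hw]; simp
    simp only [splitMap, Finset.mem_filter, Finset.mem_univ, true_and] at h1 h2
    rw [Finset.mem_coe, mem_Ind] at hS
    refine hS _ h1 _ h2 ?_
    rw [triGrid_adj_iff]
    simp only [Rnat, Fin.coe_castAdd, Fin.coe_natAdd]
    exact Or.inl ⟨trivial, Or.inl (by omega)⟩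
  rw [Finset.card_erase_of_mem hwmem, Finset.card_product] at hmain
  have hpos : 1 ≤ (Ind a n).card * (Ind b n).card :=
    Nat.one_le_iff_ne_zero.mpr (Nat.mul_ne_zero
      (Finset.card_pos.mpr ⟨_, hwmem |> Finset.mem_product.mp |>.1⟩).ne'
      (Finset.card_pos.mpr ⟨_, hwmem |> Finset.mem_product.mp |>.2⟩).ne')
  rw [triDelta_eq, triDelta_eq, triDelta_eq]
  omega

noncomputable def emb1 (a b n : ℕ) : (Fin a × Fin n) ↪ (Fin (a + b + 1) × Fin n) :=
  ⟨fun x => (⟨x.1.val, by omega⟩, x.2), by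
    intro x y h
    simp only [Prod.ext_iff, Fin.ext_iff] at h ⊢
    exact h⟩

noncomputable def emb2 (a b n : ℕ) : (Fin b × Fin n) ↪ (Fin (a + b + 1) × Fin n) :=
  ⟨fun x => (⟨a + 1 + x.1.val, by omega⟩, x.2), by
    intro x y h
    simp only [Prod.ext_iff, Fin.ext_iff] at h ⊢
    omega⟩

noncomputable def glueMap (a b n : ℕ)
    (P : Finset (Fin a × Fin n) × Finset (Fin b × Fin n)) :
    Finset (Fin (a + b + 1) × Fin n) :=
  P.1.map (emb1 a b n) ∪ P.2.map (emb2 a b n)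

lemma glueMap_mapsTo {a b n : ℕ} {P : Finset (Fin a × Fin n) × Finset (Fin b × Fin n)}
    (hP : P ∈ Ind a n ×ˢ Ind b n) : glueMap a b n P ∈ Ind (a + b + 1) n := by
  obtain ⟨h1, h2⟩ := Finset.mem_product.mp hP
  rw [mem_Ind] at h1 h2 ⊢
  intro u hu v hv hadj
  rw [glueMap, Finset.mem_union] at hu hv
  rw [triGrid_adj_iff] at hadj
  rcases hu with hu | hu <;> rcases hv with hv | hv <;>
    rw [Finset.mem_map] at hu hv <;>
    obtain ⟨x, hx, rfl⟩ := hu <;> obtain ⟨y, hy, rfl⟩ := hv <;>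
    simp only [emb1, emb2, Function.Embedding.coeFn_mk, DFunLike.coe, Rnat] at hadj
  · exact h1 x hx y hy (by rw [triGrid_adj_iff]; exact hadj)
  · have := x.1.isLt; have := y.1.isLt; omega
  · have := x.1.isLt; have := y.1.isLt; omega
  · refine h2 x hx y hy ?_
    rw [triGrid_adj_iff]
    simp only [Rnat] at hadj ⊢
    omega

lemma glueMap_inj {a b n : ℕ} : Function.Injective (glueMap a b n) := by
  intro P Q h
  have key : ∀ (S T : Finset (Fin a × Fin n)) (S' T' : Finset (Fin b × Fin n)),
      S.map (emb1 a b n) ∪ S'.map (emb2 a b n) = T.map (emb1 a b n) ∪ T'.map (emb2 a b n) →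
      S ⊆ T ∧ S' ⊆ T' := by
    intro S T S' T' hh
    constructor
    · intro x hx
      have hx' : (emb1 a b n) x ∈ T.map (emb1 a b n) ∪ T'.map (emb2 a b n) := by
        rw [← hh, Finset.mem_union]
        exact Or.inl (Finset.mem_map_of_mem _ hx)
      rcases Finset.mem_union.mp hx' with h' | h'
      · obtain ⟨y, hy, hxy⟩ := Finset.mem_map.mp h'
        rwa [(emb1 a b n).injective hxy] at hy
      · obtain ⟨y, _, hxy⟩ := Finset.mem_map.mp h'
        exfalso
        have := congrArg (fun z => (Prod.fst z).val) hxy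
        simp only [emb1, emb2, Function.Embedding.coeFn_mk, DFunLike.coe] at this
        have := x.1.isLt; omega
    · intro x hx
      have hx' : (emb2 a b n) x ∈ T.map (emb1 a b n) ∪ T'.map (emb2 a b n) := by
        rw [← hh, Finset.mem_union]
        exact Or.inr (Finset.mem_map_of_mem _ hx)
      rcases Finset.mem_union.mp hx' with h' | h'
      · obtain ⟨y, _, hxy⟩ := Finset.mem_map.mp h'
        exfalso
        have := congrArg (fun z => (Prod.fst z).val) hxy
        simp only [emb1, emb2, Function.Embedding.coeFn_mk, DFunLike.coe] at this
        have := y.1.isLt; omega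
      · obtain ⟨y, hy, hxy⟩ := Finset.mem_map.mp h'
        rwa [(emb2 a b n).injective hxy] at hy
  have h1 := key P.1 Q.1 P.2 Q.2 h
  have h2 := key Q.1 P.1 Q.2 P.2 h.symm
  exact Prod.ext (le_antisymm h1.1 h2.1) (le_antisymm h1.2 h2.2)

open Classical in
lemma triDelta_superadd {a b n : ℕ} (hn : 0 < n) :
    triDelta a n * triDelta b n + 1 ≤ triDelta (a + b + 1) n := by
  set W : Finset (Fin (a + b + 1) × Fin n) := {(⟨a, by omega⟩, ⟨0, hn⟩)} with hW
  have hWmem : W ∈ Ind (a + b + 1) n := singleton_mem_Ind _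
  have hmain : (Ind a n ×ˢ Ind b n).card ≤ ((Ind (a + b + 1) n).erase W).card := by
    apply Finset.card_le_card_of_injOn (glueMap a b n) ?_ (fun S _ T _ h => glueMap_inj h)
    intro P hP
    refine Finset.mem_erase.mpr ⟨?_, glueMap_mapsTo hP⟩
    intro heq
    have : ((⟨a, by omega⟩, ⟨0, hn⟩) : Fin (a + b + 1) × Fin n) ∈ glueMap a b n P := by
      rw [heq, hW]; exact Finset.mem_singleton_self _
    rw [glueMap, Finset.mem_union] at this
    rcases this with h' | h' <;> obtain ⟨y, _, hxy⟩ := Finset.mem_map.mp h' <;>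
      · have := congrArg (fun z => (Prod.fst z).val) hxy
        simp only [emb1, emb2, Function.Embedding.coeFn_mk, DFunLike.coe] at this
        have := y.1.isLt; omega
  rw [Finset.card_erase_of_mem hWmem, Finset.card_product] at hmain
  have hpos : 1 ≤ (Ind (a + b + 1) n).card :=
    Finset.card_pos.mpr ⟨W, hWmem⟩
  rw [triDelta_eq, triDelta_eq, triDelta_eq]
  omega

lemma iter_super_row {m n k : ℕ} (hn : 0 < n) (hk : 1 ≤ k) :
    triDelta m n ^ k ≤ triDelta (k * (m + 1) - 1) n := by
  induction k with
  | zero => omega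
  | succ k ih =>
    rcases Nat.lt_or_ge k 1 with h1 | h1
    · have : k = 0 := by omega
      subst this; simp
    · have hmono : m + 1 ≤ k * (m + 1) := Nat.le_mul_of_pos_left _ h1
      calc triDelta m n ^ (k + 1) = triDelta m n ^ k * triDelta m n := pow_succ _ _
        _ ≤ triDelta (k * (m + 1) - 1) n * triDelta m n :=
            Nat.mul_le_mul_right _ (ih h1)
        _ ≤ triDelta (k * (m + 1) - 1 + m + 1) n :=
            Nat.le_of_succ_le (triDelta_superadd hn)
        _ = triDelta ((k + 1) * (m + 1) - 1) n := by
            congr 1; rw [Nat.succ_mul]; omega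

lemma iter_sub_row (m n k : ℕ) : triDelta (k * m) n ≤ triDelta m n ^ k := by
  induction k with
  | zero => simp [triDelta_zero]
  | succ k ih =>
    calc triDelta ((k + 1) * m) n = triDelta (k * m + m) n := by rw [Nat.succ_mul]
      _ ≤ triDelta (k * m) n * triDelta m n := triDelta_subadd _ _ _
      _ ≤ triDelta m n ^ k * triDelta m n := Nat.mul_le_mul_right _ ih
      _ = triDelta m n ^ (k + 1) := (pow_succ _ _).symm

lemma iter_super_col {m n k : ℕ} (hm : 0 < m) (hk : 1 ≤ k) :
    triDelta m n ^ k ≤ triDelta m (k * (n + 1) - 1) := by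
  rw [triDelta_comm m n, triDelta_comm m _]
  exact iter_super_row hm hk

lemma iter_sub_col (m n k : ℕ) : triDelta m (k * n) ≤ triDelta m n ^ k := by
  rw [triDelta_comm m (k * n), triDelta_comm m n]
  exact iter_sub_row n m k

lemma key_nat {a b M N : ℕ} (ha : 0 < a) (hb : 0 < b) (hM : 0 < M) (hN : 0 < N)
    {k : ℕ} (hk : 1 ≤ k) :
    triDelta a b ^ (k * k) ≤
      triDelta M N ^ (((k * (a + 1) - 1) / M + 1) * ((k * (b + 1) - 1) / N + 1)) := by
  set A := k * (a + 1) - 1 with hA'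
  set B := k * (b + 1) - 1 with hB'
  have hA : 0 < A := by
    have : a + 1 ≤ k * (a + 1) := Nat.le_mul_of_pos_left _ hk
    omega
  have lower : triDelta a b ^ (k * k) ≤ triDelta A B := by
    calc triDelta a b ^ (k * k) = (triDelta a b ^ k) ^ k := by rw [← pow_mul]
      _ ≤ triDelta A b ^ k := Nat.pow_le_pow_left (iter_super_row hb hk) k
      _ ≤ triDelta A B := iter_super_col hA hk
  have AleK : A ≤ (A / M + 1) * M := by
    have h1 := Nat.div_add_mod' A M
    have h2 : A % M < M := Nat.mod_lt _ hM
    rw [Nat.add_mul, one_mul]; omega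
  have BleK : B ≤ (B / N + 1) * N := by
    have h1 := Nat.div_add_mod' B N
    have h2 : B % N < N := Nat.mod_lt _ hN
    rw [Nat.add_mul, one_mul]; omega
  have upper : triDelta A B ≤ triDelta M N ^ ((A / M + 1) * (B / N + 1)) := by
    calc triDelta A B ≤ triDelta ((A / M + 1) * M) ((B / N + 1) * N) :=
          triDelta_mono AleK BleK
      _ ≤ triDelta ((A / M + 1) * M) N ^ (B / N + 1) := iter_sub_col _ _ _
      _ ≤ (triDelta M N ^ (A / M + 1)) ^ (B / N + 1) :=
          Nat.pow_le_pow_left (iter_sub_row _ _ _) _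
      _ = triDelta M N ^ ((A / M + 1) * (B / N + 1)) := by rw [← pow_mul]
  exact lower.trans upper

lemma strict_super {m n : ℕ} (hn : 0 < n) : triDelta m n ^ 2 < triDelta (2 * m + 1) n := by
  have h := triDelta_superadd (a := m) (b := m) hn
  have he : m + m + 1 = 2 * m + 1 := by omega
  rw [he] at h
  rw [sq]
  omega

lemma strict_sub {m n : ℕ} (hm : 0 < m) (hn : 0 < n) :
    triDelta (2 * m) (2 * n) < triDelta m n ^ 4 := by
  have h1 : triDelta (m + m) (2 * n) + 1 ≤ triDelta m (2 * n) * triDelta m (2 * n) :=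
    triDelta_subadd_strict hm hm (by omega)
  have h2 : triDelta m (2 * n) ≤ triDelta m n ^ 2 := iter_sub_col m n 2
  have he : m + m = 2 * m := by omega
  rw [he] at h1
  calc triDelta (2 * m) (2 * n) < triDelta m (2 * n) * triDelta m (2 * n) := by omega
    _ ≤ triDelta m n ^ 2 * triDelta m n ^ 2 := Nat.mul_le_mul h2 h2
    _ = triDelta m n ^ 4 := by ring

/-! ### Real-valued quantities -/

noncomputable def gg (m n : ℕ) : ℝ := Real.log (triDelta m n)

noncomputable def LL (m n : ℕ) : ℝ := gg m n / (((m : ℝ) + 1) * ((n : ℝ) + 1))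

noncomputable def UU (m n : ℕ) : ℝ := gg m n / ((m : ℝ) * (n : ℝ))

lemma one_le_cast_triDelta (m n : ℕ) : (1 : ℝ) ≤ (triDelta m n : ℝ) := by
  exact_mod_cast one_le_triDelta m n

lemma gg_nonneg (m n : ℕ) : 0 ≤ gg m n := Real.log_nonneg (one_le_cast_triDelta m n)

lemma gg_pos {m n : ℕ} (hm : 0 < m) (hn : 0 < n) : 0 < gg m n :=
  Real.log_pos (by exact_mod_cast two_le_triDelta hm hn)

lemma gg_le (m n : ℕ) : gg m n ≤ (m : ℝ) * n * Real.log 2 := by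
  have h : (triDelta m n : ℝ) ≤ (2 : ℝ) ^ (m * n) := by
    exact_mod_cast triDelta_le m n
  calc gg m n ≤ Real.log ((2 : ℝ) ^ (m * n)) :=
        Real.log_le_log (by linarith [one_le_cast_triDelta m n]) h
    _ = (m : ℝ) * n * Real.log 2 := by rw [Real.log_pow]; push_cast; ring

lemma gg_of_pow_le {a b M N e f : ℕ} (h : triDelta a b ^ e ≤ triDelta M N ^ f) :
    (e : ℝ) * gg a b ≤ (f : ℝ) * gg M N := by
  have h1 : Real.log ((triDelta a b : ℝ) ^ e) ≤ Real.log ((triDelta M N : ℝ) ^ f) := by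
    apply Real.log_le_log (pow_pos (by linarith [one_le_cast_triDelta a b]) e)
    exact_mod_cast h
  rwa [Real.log_pow, Real.log_pow] at h1

lemma LL_le_UU {a b M N : ℕ} (ha : 0 < a) (hb : 0 < b) (hM : 0 < M) (hN : 0 < N) :
    LL a b ≤ UU M N := by
  have hMr : (0 : ℝ) < M := by exact_mod_cast hM
  have hNr : (0 : ℝ) < N := by exact_mod_cast hN
  have step : ∀ k : ℕ, 1 ≤ k →
      gg a b ≤ (((a : ℝ) + 1) / M + 1 / k) * (((b : ℝ) + 1) / N + 1 / k) * gg M N := by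
    intro k hk
    have hkr : (0 : ℝ) < k := by exact_mod_cast hk
    have hk0 : (k : ℝ) ≠ 0 := ne_of_gt hkr
    set K : ℕ := (k * (a + 1) - 1) / M + 1 with hK
    set K' : ℕ := (k * (b + 1) - 1) / N + 1 with hK'
    have h0 : ((k * k : ℕ) : ℝ) * gg a b ≤ ((K * K' : ℕ) : ℝ) * gg M N :=
      gg_of_pow_le (key_nat ha hb hM hN hk)
    have hcast : ∀ c : ℕ, 0 < c → ∀ x : ℕ, (((x / c : ℕ) + 1 : ℕ) : ℝ) ≤ (x : ℝ) / c + 1 := by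
      intro c hc x
      push_cast
      have := Nat.cast_div_le (α := ℝ) (m := x) (n := c)
      linarith
    have hKle : (K : ℝ) ≤ (k : ℝ) * ((a : ℝ) + 1) / M + 1 := by
      refine le_trans (hcast M hM _) ?_
      have h2 : ((k * (a + 1) - 1 : ℕ) : ℝ) ≤ (k : ℝ) * ((a : ℝ) + 1) := by
        calc ((k * (a + 1) - 1 : ℕ) : ℝ) ≤ ((k * (a + 1) : ℕ) : ℝ) := by
              exact_mod_cast Nat.sub_le _ _
          _ = (k : ℝ) * ((a : ℝ) + 1) := by push_cast; ring
      have h3 : ((k * (a + 1) - 1 : ℕ) : ℝ) / M ≤ (k : ℝ) * ((a : ℝ) + 1) / M := by gcongr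
      linarith
    have hK'le : (K' : ℝ) ≤ (k : ℝ) * ((b : ℝ) + 1) / N + 1 := by
      refine le_trans (hcast N hN _) ?_
      have h2 : ((k * (b + 1) - 1 : ℕ) : ℝ) ≤ (k : ℝ) * ((b : ℝ) + 1) := by
        calc ((k * (b + 1) - 1 : ℕ) : ℝ) ≤ ((k * (b + 1) : ℕ) : ℝ) := by
              exact_mod_cast Nat.sub_le _ _
          _ = (k : ℝ) * ((b : ℝ) + 1) := by push_cast; ring
      have h3 : ((k * (b + 1) - 1 : ℕ) : ℝ) / N ≤ (k : ℝ) * ((b : ℝ) + 1) / N := by gcongr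
      linarith
    have h4 : ((k : ℝ) * k) * gg a b ≤
        (((k : ℝ) * ((a : ℝ) + 1) / M + 1) * ((k : ℝ) * ((b : ℝ) + 1) / N + 1)) * gg M N := by
      calc ((k : ℝ) * k) * gg a b = ((k * k : ℕ) : ℝ) * gg a b := by push_cast; ring
        _ ≤ ((K * K' : ℕ) : ℝ) * gg M N := h0
        _ = ((K : ℝ) * (K' : ℝ)) * gg M N := by push_cast; ring
        _ ≤ _ := by
            apply mul_le_mul_of_nonneg_right _ (gg_nonneg M N)
            exact mul_le_mul hKle hK'le (by positivity) (by positivity)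
    have h6 : ((k : ℝ) * k) * gg a b ≤
        ((k : ℝ) * k) * ((((a : ℝ) + 1) / M + 1 / k) * (((b : ℝ) + 1) / N + 1 / k) * gg M N) := by
      refine h4.trans (le_of_eq ?_)
      field_simp
    exact le_of_mul_le_mul_left h6 (by positivity)
  have lim : Tendsto
      (fun k : ℕ => (((a : ℝ) + 1) / M + 1 / k) * (((b : ℝ) + 1) / N + 1 / k) * gg M N) atTop
      (𝓝 ((((a : ℝ) + 1) / M) * ((((b : ℝ) + 1) / N)) * gg M N)) := by
    have h0 : Tendsto (fun k : ℕ => (1 : ℝ) / k) atTop (𝓝 0) :=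
      tendsto_one_div_atTop_nhds_zero_nat
    have h1 : Tendsto
        (fun k : ℕ => (((a : ℝ) + 1) / M + 1 / k) * (((b : ℝ) + 1) / N + 1 / k) * gg M N) atTop
        (𝓝 ((((a : ℝ) + 1) / M + 0) * ((((b : ℝ) + 1) / N) + 0) * gg M N)) :=
      ((tendsto_const_nhds.add h0).mul (tendsto_const_nhds.add h0)).mul tendsto_const_nhds
    simpa using h1
  have hfin : gg a b ≤ (((a : ℝ) + 1) / M) * (((b : ℝ) + 1) / N) * gg M N :=
    ge_of_tendsto lim (eventually_atTop.mpr ⟨1, step⟩)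
  rw [LL, UU, div_le_div_iff₀ (by positivity) (mul_pos hMr hNr)]
  calc gg a b * ((M : ℝ) * N) ≤ ((((a : ℝ) + 1) / M) * (((b : ℝ) + 1) / N) * gg M N) * ((M : ℝ) * N) :=
        mul_le_mul_of_nonneg_right hfin (le_of_lt (mul_pos hMr hNr))
    _ = gg M N * (((a : ℝ) + 1) * ((b : ℝ) + 1)) := by field_simp

lemma two_gg_lt {m n : ℕ} (hn : 0 < n) : 2 * gg m n < gg (2 * m + 1) n := by
  have h := strict_super (m := m) hn
  have h1 : Real.log ((triDelta m n : ℝ) ^ 2) < Real.log (triDelta (2 * m + 1) n) := by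
    apply Real.log_lt_log (pow_pos (by linarith [one_le_cast_triDelta m n]) 2)
    exact_mod_cast h
  rwa [Real.log_pow, Nat.cast_ofNat] at h1

lemma gg_lt_four {m n : ℕ} (hm : 0 < m) (hn : 0 < n) :
    gg (2 * m) (2 * n) < 4 * gg m n := by
  have h := strict_sub hm hn
  have h1 : Real.log (triDelta (2 * m) (2 * n)) < Real.log ((triDelta m n : ℝ) ^ 4) := by
    apply Real.log_lt_log (by linarith [one_le_cast_triDelta (2 * m) (2 * n)])
    exact_mod_cast h
  rwa [Real.log_pow, Nat.cast_ofNat] at h1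

lemma LL_lt_LL {m n : ℕ} (hm : 0 < m) (hn : 0 < n) : LL m n < LL (2 * m + 1) n := by
  have hkey := two_gg_lt (m := m) hn
  have hden : (0 : ℝ) < 2 * (((m : ℝ) + 1) * ((n : ℝ) + 1)) := by positivity
  have e1 : LL m n = 2 * gg m n / (2 * (((m : ℝ) + 1) * ((n : ℝ) + 1))) := by
    rw [LL, mul_div_mul_left _ _ (two_ne_zero)]
  have e2 : LL (2 * m + 1) n = gg (2 * m + 1) n / (2 * (((m : ℝ) + 1) * ((n : ℝ) + 1))) := by
    rw [LL]
    congr 1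
    push_cast
    ring
  rw [e1, e2]
  exact (div_lt_div_iff_of_pos_right hden).mpr hkey

lemma UU_lt_UU {m n : ℕ} (hm : 0 < m) (hn : 0 < n) : UU (2 * m) (2 * n) < UU m n := by
  have hkey := gg_lt_four hm hn
  have hmr : (0 : ℝ) < m := by exact_mod_cast hm
  have hnr : (0 : ℝ) < n := by exact_mod_cast hn
  have hden : (0 : ℝ) < 4 * ((m : ℝ) * (n : ℝ)) := by positivity
  have e1 : UU (2 * m) (2 * n) = gg (2 * m) (2 * n) / (4 * ((m : ℝ) * (n : ℝ))) := by
    rw [UU]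
    congr 1
    push_cast
    ring
  have e2 : UU m n = 4 * gg m n / (4 * ((m : ℝ) * (n : ℝ))) := by
    rw [UU, mul_div_mul_left _ _ (by norm_num : (4 : ℝ) ≠ 0)]
  rw [e1, e2]
  exact (div_lt_div_iff_of_pos_right hden).mpr hkey

noncomputable def SS : Set ℝ := {x | ∃ m n : ℕ, 0 < m ∧ 0 < n ∧ x = LL m n}

lemma SS_nonempty : SS.Nonempty := ⟨LL 1 1, 1, 1, one_pos, one_pos, rfl⟩

lemma SS_bddAbove : BddAbove SS := by
  refine ⟨UU 1 1, ?_⟩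
  rintro x ⟨m, n, hm, hn, rfl⟩
  exact LL_le_UU hm hn one_pos one_pos

noncomputable def fDel : ℝ := sSup SS

lemma LL_lt_fDel {m n : ℕ} (hm : 0 < m) (hn : 0 < n) : LL m n < fDel := by
  have h1 : LL (2 * m + 1) n ∈ SS := ⟨2 * m + 1, n, by omega, hn, rfl⟩
  exact lt_of_lt_of_le (LL_lt_LL hm hn) (le_csSup SS_bddAbove h1)

lemma fDel_le_UU {m n : ℕ} (hm : 0 < m) (hn : 0 < n) : fDel ≤ UU m n := by
  apply csSup_le SS_nonempty
  rintro x ⟨a, b, ha, hb, rfl⟩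
  exact LL_le_UU ha hb hm hn

lemma fDel_lt_UU {m n : ℕ} (hm : 0 < m) (hn : 0 < n) : fDel < UU m n :=
  lt_of_le_of_lt (fDel_le_UU (by omega : 0 < 2 * m) (by omega : 0 < 2 * n)) (UU_lt_UU hm hn)

lemma LL_le_fDel {m n : ℕ} (hm : 0 < m) (hn : 0 < n) : LL m n ≤ fDel :=
  le_csSup SS_bddAbove ⟨m, n, hm, hn, rfl⟩

lemma UU_sub_LL {m n : ℕ} (hm : 0 < m) (hn : 0 < n) :
    UU m n - LL m n ≤ Real.log 2 * (1 / ((m : ℝ) + 1) + 1 / ((n : ℝ) + 1)) := by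
  have hmr : (0 : ℝ) < m := by exact_mod_cast hm
  have hnr : (0 : ℝ) < n := by exact_mod_cast hn
  have hG0 := gg_nonneg m n
  have hGle := gg_le m n
  have hlog2 : (0 : ℝ) ≤ Real.log 2 := Real.log_nonneg (by norm_num)
  have h1 : UU m n - LL m n =
      gg m n * ((m : ℝ) + (n : ℝ) + 1) / (((m : ℝ) * n) * (((m : ℝ) + 1) * ((n : ℝ) + 1))) := by
    rw [UU, LL]
    field_simp
    ring
  have h2 : gg m n * ((m : ℝ) + (n : ℝ) + 1) / (((m : ℝ) * n) * (((m : ℝ) + 1) * ((n : ℝ) + 1)))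
      ≤ ((m : ℝ) * n * Real.log 2) * ((m : ℝ) + (n : ℝ) + 1) /
        (((m : ℝ) * n) * (((m : ℝ) + 1) * ((n : ℝ) + 1))) := by
    gcongr <;> linarith
  have h3 : ((m : ℝ) * n * Real.log 2) * ((m : ℝ) + (n : ℝ) + 1) /
        (((m : ℝ) * n) * (((m : ℝ) + 1) * ((n : ℝ) + 1)))
      = Real.log 2 * (((m : ℝ) + (n : ℝ) + 1) / (((m : ℝ) + 1) * ((n : ℝ) + 1))) := by
    field_simp
  have h4 : Real.log 2 * (((m : ℝ) + (n : ℝ) + 1) / (((m : ℝ) + 1) * ((n : ℝ) + 1)))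
      ≤ Real.log 2 * (((m : ℝ) + (n : ℝ) + 2) / (((m : ℝ) + 1) * ((n : ℝ) + 1))) := by
    gcongr <;> linarith
  have h5 : ((m : ℝ) + (n : ℝ) + 2) / (((m : ℝ) + 1) * ((n : ℝ) + 1))
      = 1 / ((m : ℝ) + 1) + 1 / ((n : ℝ) + 1) := by
    field_simp
    ring
  rw [h1]
  calc _ ≤ _ := h2
    _ = _ := h3
    _ ≤ _ := h4
    _ = _ := by rw [h5]

lemma bound_tendsto_zero :
    Tendsto (fun p : ℕ × ℕ => Real.log 2 * (1 / ((p.1 : ℝ) + 1) + 1 / ((p.2 : ℝ) + 1)))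
      atTop (𝓝 0) := by
  have h1 : Tendsto (fun p : ℕ × ℕ => (1 : ℝ) / ((p.1 : ℝ) + 1)) atTop (𝓝 0) := by
    rw [← prod_atTop_atTop_eq]
    exact tendsto_one_div_add_atTop_nhds_zero_nat.comp tendsto_fst
  have h2 : Tendsto (fun p : ℕ × ℕ => (1 : ℝ) / ((p.2 : ℝ) + 1)) atTop (𝓝 0) := by
    rw [← prod_atTop_atTop_eq]
    exact tendsto_one_div_add_atTop_nhds_zero_nat.comp tendsto_snd
  have h3 : Tendsto (fun p : ℕ × ℕ =>
      Real.log 2 * (1 / ((p.1 : ℝ) + 1) + 1 / ((p.2 : ℝ) + 1))) atTop (𝓝 (Real.log 2 * (0 + 0))) :=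
    tendsto_const_nhds.mul (h1.add h2)
  simpa using h3

theorem tri_free_energy_exists :
    ∃ fΔ : ℝ,
      (∀ m n : ℕ, 0 < m → 0 < n →
        Real.log (triDelta m n) / (((m : ℝ) + 1) * ((n : ℝ) + 1)) < fΔ ∧
        fΔ < Real.log (triDelta m n) / ((m : ℝ) * (n : ℝ))) ∧
      Tendsto (fun p : ℕ × ℕ =>
          Real.log (triDelta p.1 p.2) / ((p.1 : ℝ) * (p.2 : ℝ)))
        atTop (𝓝 fΔ) := by
  refine ⟨fDel, fun m n hm hn => ⟨LL_lt_fDel hm hn, fDel_lt_UU hm hn⟩, ?_⟩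
  have hfun : (fun p : ℕ × ℕ => Real.log (triDelta p.1 p.2) / ((p.1 : ℝ) * (p.2 : ℝ)))
      = fun p : ℕ × ℕ => UU p.1 p.2 := rfl
  rw [hfun, tendsto_iff_dist_tendsto_zero]
  apply squeeze_zero' (g := fun p : ℕ × ℕ =>
    Real.log 2 * (1 / ((p.1 : ℝ) + 1) + 1 / ((p.2 : ℝ) + 1)))
    (Eventually.of_forall fun _ => dist_nonneg) ?_ bound_tendsto_zero
  have hev : ∀ᶠ p : ℕ × ℕ in atTop, 1 ≤ p.1 ∧ 1 ≤ p.2 :=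
    eventually_atTop.mpr ⟨(1, 1), fun p hp => ⟨hp.1, hp.2⟩⟩
  filter_upwards [hev] with p hp
  obtain ⟨hm, hn⟩ := hp
  have h1 : LL p.1 p.2 < fDel := LL_lt_fDel hm hn
  have h2 : fDel < UU p.1 p.2 := fDel_lt_UU hm hn
  have h3 := UU_sub_LL hm hn
  rw [Real.dist_eq, abs_of_pos (by linarith)]
  linarith
end

section
/- For every fixed positive integer n there exists a real number L such that, as m → ∞, all three sequences m ↦ ln N(m,n)/(m·n), m ↦ ln C(m,n)/(m·n), and m ↦ ln Γ(m,n)/(m·n) converge to L. (Corollary: f(∞,n) = f_C(∞,n) = f_Γ(∞,n); when the width is infinite, the grid graphs on the plane, the cylinder and the twisted cylinder are equivalent.) -/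
open SimpleGraph Filter Real Topology

/-- `C(m,n)`: number of independent sets of the `m × n` cylindrical grid graph,
the box product of the cycle graph on `m` vertices with the path graph on `n`
vertices. -/
noncomputable def cylC (m n : ℕ) : ℕ :=
  numIndep (cycleGraph m □ pathGraph n)


/-- The `m × n` twisted cylindrical grid graph: vertices `0, …, m*n - 1`, with
`i` and `j` adjacent iff `|i - j| = 1` or `|i - j| = m`. -/
noncomputable def twistGrid (m n : ℕ) : SimpleGraph (Fin (m * n)) :=
  SimpleGraph.fromRel (fun i j => i.val + 1 = j.val ∨ i.val + m = j.val)

/-- `Γ(m,n)`: number of independent sets of the `m × n` twisted cylindrical grid graph. -/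
noncomputable def twistGamma (m n : ℕ) : ℕ := numIndep (twistGrid m n)

/-! ### Auxiliary counting lemmas -/

open Classical in
lemma one_le_numIndep {V : Type*} [Fintype V] (G : SimpleGraph V) : 1 ≤ numIndep G := by
  rw [numIndep]
  exact Finset.card_pos.mpr ⟨∅, by simp⟩

open Classical in
lemma numIndep_le_of_map {V W : Type*} [Fintype V] [Fintype W]
    (G : SimpleGraph V) (H : SimpleGraph W) (f : V ↪ W)
    (hf : ∀ u v, H.Adj (f u) (f v) → G.Adj u v) :
    numIndep G ≤ numIndep H := by
  rw [numIndep, numIndep]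
  apply Finset.card_le_card_of_injOn (fun s => s.map f)
  · intro s hs
    simp only [Finset.mem_coe, Finset.mem_filter, Finset.mem_univ, true_and] at hs ⊢
    intro u hu v hv
    simp only [Finset.mem_map] at hu hv
    obtain ⟨a, ha, rfl⟩ := hu; obtain ⟨b, hb, rfl⟩ := hv
    exact fun h => hs a ha b hb (hf a b h)
  · intro s _ t _ h
    exact Finset.map_injective f h

open Classical in
lemma numIndep_le_mul {U V W : Type*} [Fintype U] [Fintype V] [Fintype W]
    (G : SimpleGraph U) (G1 : SimpleGraph V) (G2 : SimpleGraph W) (f : V ⊕ W ≃ U)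
    (h1 : ∀ a b : V, G1.Adj a b → G.Adj (f (Sum.inl a)) (f (Sum.inl b)))
    (h2 : ∀ a b : W, G2.Adj a b → G.Adj (f (Sum.inr a)) (f (Sum.inr b))) :
    numIndep G ≤ numIndep G1 * numIndep G2 := by
  rw [numIndep, numIndep, numIndep, ← Finset.card_product]
  apply Finset.card_le_card_of_injOn
    (fun s => (Finset.univ.filter fun a : V => f (Sum.inl a) ∈ s,
               Finset.univ.filter fun b : W => f (Sum.inr b) ∈ s))
  · intro s hs
    simp only [Finset.mem_coe, Finset.mem_filter, Finset.mem_univ, true_and, Finset.mem_product] at hs ⊢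
    constructor
    · intro a ha b hb hadj
      exact hs _ ha _ hb (h1 a b hadj)
    · intro a ha b hb hadj
      exact hs _ ha _ hb (h2 a b hadj)
  · intro s _ t _ h
    have h1' := congrArg Prod.fst h
    have h2' := congrArg Prod.snd h
    simp only at h1' h2'
    ext u
    obtain ⟨x, rfl⟩ := f.surjective u
    cases x with
    | inl a =>
      have := Finset.ext_iff.mp h1' a
      simpa using this
    | inr b =>
      have := Finset.ext_iff.mp h2' b
      simpa using this

lemma addMul_inj {M a b q q' : ℕ} (ha : a < M) (hb : b < M) (h : q * M + a = q' * M + b) :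
    q = q' ∧ a = b := by
  have h1 : (q * M + a) % M = a := by
    rw [Nat.mul_comm, Nat.mul_add_mod, Nat.mod_eq_of_lt ha]
  have h2 : (q' * M + b) % M = b := by
    rw [Nat.mul_comm, Nat.mul_add_mod, Nat.mod_eq_of_lt hb]
  rw [h, h2] at h1
  subst h1
  have : q * M = q' * M := by omega
  exact ⟨Nat.eq_of_mul_eq_mul_right (by omega) this, rfl⟩

/-! ### Comparison lemmas between the three graph families -/

lemma gridN_submul (a b n : ℕ) : gridN (a + b) n ≤ gridN a n * gridN b n := by
  apply numIndep_le_mul _ _ _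
    (((Equiv.sumProdDistrib (Fin a) (Fin b) (Fin n)).symm).trans
      (Equiv.prodCongr finSumFinEquiv (Equiv.refl (Fin n))))
  · rintro ⟨i, j⟩ ⟨i', j'⟩ hadj
    have e1 : (((Equiv.sumProdDistrib (Fin a) (Fin b) (Fin n)).symm).trans
      (Equiv.prodCongr finSumFinEquiv (Equiv.refl (Fin n)))) (Sum.inl (i, j))
      = (Fin.castAdd b i, j) := by simp
    have e2 : (((Equiv.sumProdDistrib (Fin a) (Fin b) (Fin n)).symm).trans
      (Equiv.prodCongr finSumFinEquiv (Equiv.refl (Fin n)))) (Sum.inl (i', j'))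
      = (Fin.castAdd b i', j') := by simp
    rw [e1, e2]
    rw [boxProd_adj] at hadj ⊢
    rcases hadj with ⟨h, h2⟩ | ⟨h, h2⟩
    · refine Or.inl ⟨?_, h2⟩
      rw [pathGraph_adj] at h ⊢
      simpa using h
    · exact Or.inr ⟨h, congrArg (Fin.castAdd b) h2⟩
  · rintro ⟨i, j⟩ ⟨i', j'⟩ hadj
    have e1 : (((Equiv.sumProdDistrib (Fin a) (Fin b) (Fin n)).symm).trans
      (Equiv.prodCongr finSumFinEquiv (Equiv.refl (Fin n)))) (Sum.inr (i, j))
      = (Fin.natAdd a i, j) := by simp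
    have e2 : (((Equiv.sumProdDistrib (Fin a) (Fin b) (Fin n)).symm).trans
      (Equiv.prodCongr finSumFinEquiv (Equiv.refl (Fin n)))) (Sum.inr (i', j'))
      = (Fin.natAdd a i', j') := by simp
    rw [e1, e2]
    rw [boxProd_adj] at hadj ⊢
    dsimp only at hadj ⊢
    rcases hadj with ⟨h, h2⟩ | ⟨h, h2⟩
    · refine Or.inl ⟨?_, h2⟩
      rw [pathGraph_adj] at h ⊢
      simp only [Fin.coe_natAdd]
      omega
    · exact Or.inr ⟨h, congrArg (Fin.natAdd a) h2⟩

lemma cylC_le_gridN (m n : ℕ) : cylC m n ≤ gridN m n := by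
  apply numIndep_le_of_map _ _ (Function.Embedding.refl _)
  intro u v h
  rw [boxProd_adj] at h ⊢
  rcases h with ⟨h, h2⟩ | h
  · exact Or.inl ⟨pathGraph_le_cycleGraph h, h2⟩
  · exact Or.inr h

lemma fin_sub_val_eq_one {M : ℕ} {x y : Fin (M + 1)} (hx : (x : ℕ) < M) (hy : (y : ℕ) < M)
    (h : ((x - y : Fin (M + 1)) : ℕ) = 1) : (y : ℕ) + 1 = (x : ℕ) := by
  have hval : ((x - y : Fin (M + 1)) : ℕ) = (M + 1 - (y : ℕ) + (x : ℕ)) % (M + 1) := by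
    rw [Fin.sub_def]
  rw [hval] at h
  rcases Nat.lt_or_ge (M + 1 - (y : ℕ) + (x : ℕ)) (M + 1) with hlt | hge
  · rw [Nat.mod_eq_of_lt hlt] at h; omega
  · rw [Nat.mod_eq_sub_mod hge, Nat.mod_eq_of_lt (by omega)] at h; omega

lemma gridN_le_cylC (m n : ℕ) : gridN m n ≤ cylC (m + 1) n := by
  have hemb : Function.Injective (fun p : Fin m × Fin n =>
      ((⟨p.1.val, by omega⟩ : Fin (m + 1)), p.2)) := by
    rintro ⟨i, j⟩ ⟨i', j'⟩ h
    simp only [Prod.mk.injEq, Fin.mk.injEq] at h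
    simp [Prod.ext_iff, Fin.ext_iff, h.1, h.2]
  apply numIndep_le_of_map _ _ ⟨_, hemb⟩
  rintro ⟨i, j⟩ ⟨i', j'⟩ h
  rw [boxProd_adj] at h ⊢
  rcases h with ⟨h, h2⟩ | ⟨h, h2⟩
  · refine Or.inl ⟨?_, h2⟩
    rw [cycleGraph_adj'] at h
    rw [pathGraph_adj]
    rcases h with h | h
    · exact Or.inr (fin_sub_val_eq_one i.isLt i'.isLt h)
    · exact Or.inl (fin_sub_val_eq_one i'.isLt i.isLt h)
  · simp only [Function.Embedding.coeFn_mk, Fin.mk.injEq] at h2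
    exact Or.inr ⟨h, Fin.ext h2⟩

lemma twistGamma_le_gridN (m n : ℕ) (hm : 0 < m) : twistGamma m n ≤ gridN m n := by
  have hemb : Function.Injective (fun k : Fin (m * n) =>
      ((⟨k.val % m, Nat.mod_lt _ hm⟩ : Fin m),
       (⟨k.val / m, Nat.div_lt_of_lt_mul (by have := k.isLt; omega)⟩ : Fin n))) := by
    intro k k' h
    simp only [Prod.mk.injEq, Fin.mk.injEq] at h
    have h1 := Nat.div_add_mod k.val m
    have h2 := Nat.div_add_mod k'.val m
    have h3 : m * (k.val / m) = m * (k'.val / m) := by rw [h.2]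
    exact Fin.ext (by omega)
  apply numIndep_le_of_map _ _ ⟨_, hemb⟩
  intro k k' h
  rw [boxProd_adj] at h
  simp only [Function.Embedding.coeFn_mk, pathGraph_adj, Fin.mk.injEq] at h
  rw [twistGrid, SimpleGraph.fromRel_adj]
  have h1 := Nat.div_add_mod k.val m
  have h2 := Nat.div_add_mod k'.val m
  have hrel : k.val + 1 = k'.val ∨ k.val + m = k'.val ∨ k'.val + 1 = k.val ∨
      k'.val + m = k.val := by
    rcases h with ⟨h, hq⟩ | ⟨hq, h⟩
    · have h3 : m * (k.val / m) = m * (k'.val / m) := by rw [hq]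
      omega
    · rcases hq with hq | hq
      · have h3 : m * (k.val / m) + m = m * (k'.val / m) := by rw [← hq]; ring
        omega
      · have h3 : m * (k'.val / m) + m = m * (k.val / m) := by rw [← hq]; ring
        omega
  refine ⟨fun e => by rw [e] at hrel; omega, by tauto⟩

lemma gridN_le_twistGamma (m n : ℕ) : gridN m n ≤ twistGamma (m + 1) n := by
  have hemb : Function.Injective (fun p : Fin m × Fin n =>
      (⟨p.2.val * (m + 1) + p.1.val, by
        have h1 : p.2.val * (m + 1) + p.1.val < (p.2.val + 1) * (m + 1) := by
          have := p.1.isLt; rw [Nat.add_mul]; omega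
        have h2 : (p.2.val + 1) * (m + 1) ≤ n * (m + 1) :=
          Nat.mul_le_mul_right _ p.2.isLt
        calc p.2.val * (m + 1) + p.1.val < (p.2.val + 1) * (m + 1) := h1
          _ ≤ n * (m + 1) := h2
          _ = (m + 1) * n := Nat.mul_comm _ _⟩ : Fin ((m + 1) * n))) := by
    rintro ⟨r, q⟩ ⟨r', q'⟩ h
    simp only [Fin.mk.injEq] at h
    obtain ⟨hq, hr⟩ := addMul_inj (by omega) (by omega) h
    simp [Prod.ext_iff, Fin.ext_iff, hq, hr]
  apply numIndep_le_of_map _ _ ⟨_, hemb⟩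
  rintro ⟨r, q⟩ ⟨r', q'⟩ h
  rw [twistGrid, SimpleGraph.fromRel_adj] at h
  simp only [Function.Embedding.coeFn_mk] at h
  obtain ⟨-, h⟩ := h
  have hr : (r : ℕ) < m := r.isLt
  have hr' : (r' : ℕ) < m := r'.isLt
  rw [boxProd_adj, pathGraph_adj, pathGraph_adj]
  simp only [Fin.ext_iff]
  rcases h with (h | h) | (h | h)
  · have := addMul_inj (M := m + 1) (a := (r : ℕ) + 1) (b := (r' : ℕ))
      (q := (q : ℕ)) (q' := (q' : ℕ)) (by omega) (by omega) (by omega)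
    omega
  · have h' : ((q : ℕ) + 1) * (m + 1) + (r : ℕ) = (q' : ℕ) * (m + 1) + (r' : ℕ) := by
      rw [Nat.add_mul]; omega
    have := addMul_inj (by omega : (r : ℕ) < m + 1) (by omega) h'
    omega
  · have := addMul_inj (M := m + 1) (a := (r' : ℕ) + 1) (b := (r : ℕ))
      (q := (q' : ℕ)) (q' := (q : ℕ)) (by omega) (by omega) (by omega)
    omega
  · have h' : ((q' : ℕ) + 1) * (m + 1) + (r' : ℕ) = (q : ℕ) * (m + 1) + (r : ℕ) := by
      rw [Nat.add_mul]; omega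
    have := addMul_inj (by omega : (r' : ℕ) < m + 1) (by omega) h'
    omega

/-! ### The main theorem -/

theorem wide_strips_equivalent (n : ℕ) (hn : 0 < n) :
    ∃ L : ℝ,
      Tendsto (fun m : ℕ => Real.log (gridN m n) / ((m : ℝ) * (n : ℝ))) atTop (𝓝 L) ∧
      Tendsto (fun m : ℕ => Real.log (cylC m n) / ((m : ℝ) * (n : ℝ))) atTop (𝓝 L) ∧
      Tendsto (fun m : ℕ => Real.log (twistGamma m n) / ((m : ℝ) * (n : ℝ))) atTop (𝓝 L) := by
  set u : ℕ → ℝ := fun m => Real.log (gridN m n) with hu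
  have hposN : ∀ m, (0 : ℝ) < (gridN m n : ℝ) := fun m => by
    exact_mod_cast Nat.lt_of_lt_of_le Nat.zero_lt_one (one_le_numIndep _)
  have hsub : Subadditive u := by
    intro a b
    have hab : (gridN (a + b) n : ℝ) ≤ (gridN a n : ℝ) * (gridN b n : ℝ) := by
      exact_mod_cast gridN_submul a b n
    have h := Real.log_le_log (hposN (a + b)) hab
    rwa [Real.log_mul (hposN a).ne' (hposN b).ne'] at h
  have hbdd : BddBelow (Set.range fun m : ℕ => u m / m) := by
    refine ⟨0, ?_⟩
    rintro x ⟨m, rfl⟩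
    exact div_nonneg (Real.log_natCast_nonneg _) (Nat.cast_nonneg _)
  have hmain := hsub.tendsto_lim hbdd
  have h1 : Tendsto (fun m : ℕ => u m / ((m : ℝ) * n)) atTop (𝓝 (hsub.lim / n)) := by
    simpa [div_div] using hmain.div_const (n : ℝ)
  -- the limit along the shifted sequence `m ↦ u (m-1) / (m n)`
  have hA : Tendsto (fun m : ℕ => u (m - 1) / (((m - 1 : ℕ) : ℝ) * n)) atTop
      (𝓝 (hsub.lim / n)) := h1.comp (tendsto_sub_atTop_nat 1)
  have hB : Tendsto (fun m : ℕ => ((m - 1 : ℕ) : ℝ) / (m : ℝ)) atTop (𝓝 1) := by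
    have h2 : Tendsto (fun m : ℕ => 1 - 1 / (m : ℝ)) atTop (𝓝 (1 - 0)) :=
      tendsto_const_nhds.sub tendsto_one_div_atTop_nhds_zero_nat
    rw [sub_zero] at h2
    refine h2.congr' ?_
    filter_upwards [eventually_ge_atTop 1] with m hm
    have hm0 : (m : ℝ) ≠ 0 := by
      have : (0 : ℝ) < m := by exact_mod_cast hm
      linarith
    rw [Nat.cast_sub hm, Nat.cast_one]
    field_simp
  have hC := hA.mul hB
  rw [mul_one] at hC
  have hshift : Tendsto (fun m : ℕ => u (m - 1) / ((m : ℝ) * n)) atTop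
      (𝓝 (hsub.lim / n)) := by
    refine hC.congr' ?_
    filter_upwards [eventually_ge_atTop 2] with m hm
    have hm1 : (0 : ℝ) < ((m - 1 : ℕ) : ℝ) := by
      exact_mod_cast Nat.sub_pos_of_lt (by omega)
    have hm0 : (0 : ℝ) < (m : ℝ) := by exact_mod_cast (by omega : 0 < m)
    have hn0 : (0 : ℝ) < (n : ℝ) := by exact_mod_cast hn
    rw [Nat.cast_sub (by omega : 1 ≤ m), Nat.cast_one]
    have h1' : (m : ℝ) - 1 ≠ 0 := by
      have : (1 : ℝ) < (m : ℝ) := by exact_mod_cast (by omega : 1 < m)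
      intro h; linarith
    field_simp
  -- a general squeezing principle for the two other families
  have key : ∀ X : ℕ → ℕ,
      (∀ m, 1 ≤ X m) →
      (∀ m, 1 ≤ m → gridN (m - 1) n ≤ X m) →
      (∀ m, 1 ≤ m → X m ≤ gridN m n) →
      Tendsto (fun m : ℕ => Real.log (X m) / ((m : ℝ) * n)) atTop (𝓝 (hsub.lim / n)) := by
    intro X hX hlow hupp
    refine tendsto_of_tendsto_of_tendsto_of_le_of_le' hshift h1 ?_ ?_
    · filter_upwards [eventually_ge_atTop 1] with m hm
      have hmn : (0 : ℝ) < (m : ℝ) * n := by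
        have ha : (0 : ℝ) < (m : ℝ) := by exact_mod_cast hm
        have hb : (0 : ℝ) < (n : ℝ) := by exact_mod_cast hn
        positivity
      have hnum : u (m - 1) ≤ Real.log (X m) := by
        apply Real.log_le_log (hposN (m - 1))
        exact_mod_cast hlow m hm
      exact div_le_div_of_nonneg_right hnum hmn.le
    · filter_upwards [eventually_ge_atTop 1] with m hm
      have hmn : (0 : ℝ) < (m : ℝ) * n := by
        have ha : (0 : ℝ) < (m : ℝ) := by exact_mod_cast hm
        have hb : (0 : ℝ) < (n : ℝ) := by exact_mod_cast hn
        positivity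
      have hXpos : (0 : ℝ) < (X m : ℝ) := by
        exact_mod_cast Nat.lt_of_lt_of_le Nat.zero_lt_one (hX m)
      have hnum : Real.log (X m) ≤ u m := by
        apply Real.log_le_log hXpos
        exact_mod_cast hupp m hm
      exact div_le_div_of_nonneg_right hnum hmn.le
  refine ⟨hsub.lim / n, h1, ?_, ?_⟩
  · refine key (fun m => cylC m n) (fun m => one_le_numIndep _) ?_
      (fun m _ => cylC_le_gridN m n)
    intro m hm
    have h := gridN_le_cylC (m - 1) n
    rwa [Nat.sub_add_cancel hm] at h
  · refine key (fun m => twistGamma m n) (fun m => one_le_numIndep _) ?_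
      (fun m hm => twistGamma_le_gridN m n hm)
    intro m hm
    have h := gridN_le_twistGamma (m - 1) n
    rwa [Nat.sub_add_cancel hm] at h
end
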